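/- Let p > q be odd primes and let G be a finite group. If G embeds transitively in Hol(C_p × D_q) or G embeds transitively in Hol(C_q × D_p), then G also embeds transitively in Hol(D_{pq}), where C_p × D_q = Multiplicative (ZMod p) × DihedralGroup q, C_q × D_p = Multiplicative (ZMod q) × DihedralGroup p, and D_{pq} = DihedralGroup (p*q). -/

import Mathlib

/-- The left regular representation of a group `N` in `Equiv.Perm N`. -/
def leftReg (N : Type*) [Group N] : N →* Equiv.Perm N :=
  MulAction.toPermHom N N

/-- The holomorph of `N`: the normalizer of the image of the left regular
representation inside `Equiv.Perm N`. -/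
def Hol (N : Type*) [Group N] : Subgroup (Equiv.Perm N) :=
  Subgroup.normalizer ((leftReg N).range : Set (Equiv.Perm N))

/-- A subgroup of `Equiv.Perm N` is transitive on `N`. -/
def IsTransitiveSubgroup {N : Type*} [Group N] (M : Subgroup (Equiv.Perm N)) : Prop :=
  ∀ a b : N, ∃ g ∈ M, g a = b

/-- A group `G` embeds transitively in `Hol(N)` if there is an injective
homomorphism `G →* Equiv.Perm N` whose range lies in `Hol(N)` and is
transitive on `N`. -/
def EmbedsTransitively (G : Type*) [Group G] (N : Type*) [Group N] : Prop :=
  ∃ φ : G →* Equiv.Perm N, Function.Injective φ ∧ φ.range ≤ Hol N ∧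
    IsTransitiveSubgroup φ.range

lemma leftReg_apply {N : Type*} [Group N] (n x : N) : leftReg N n x = n * x := rfl

lemma mem_Hol_iff {N : Type*} [Group N] [Finite N] (π : Equiv.Perm N) :
    π ∈ Hol N ↔ ∀ a b : N, π (a * b) * (π 1)⁻¹ = (π a * (π 1)⁻¹) * (π b * (π 1)⁻¹) := by
  constructor
  · intro hπ a b
    have key : ∀ n : N, π * leftReg N n * π⁻¹ = leftReg N (π n * (π 1)⁻¹) := by
      intro n
      have h1 : π * leftReg N n * π⁻¹ ∈ (leftReg N).range := by
        rw [Hol, Subgroup.mem_normalizer_iff] at hπ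
        exact (hπ (leftReg N n)).mp ⟨n, rfl⟩
      obtain ⟨m, hm⟩ := h1
      have hval := congrArg (fun σ : Equiv.Perm N => σ (π 1)) hm
      simp only [Equiv.Perm.mul_apply, Equiv.Perm.coe_inv, Equiv.symm_apply_apply, leftReg_apply, mul_one] at hval
      have hm' : m = π n * (π 1)⁻¹ := by rw [← hval]; group
      rw [hm'] at hm
      exact hm.symm
    have h2 : leftReg N (π (a * b) * (π 1)⁻¹) =
        leftReg N (π a * (π 1)⁻¹) * leftReg N (π b * (π 1)⁻¹) := by
      rw [← key (a * b), ← key a, ← key b, map_mul]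
      group
    have := congrArg (fun σ : Equiv.Perm N => σ 1) h2
    simpa only [Equiv.Perm.mul_apply, leftReg_apply, mul_one] using this
  · intro hf
    set f : N → N := fun x => π x * (π 1)⁻¹ with hfdef
    have hmul : ∀ a b, f (a * b) = f a * f b := hf
    have hπx : ∀ x, π x = f x * π 1 := by intro x; simp [hfdef]
    have hconj : ∀ n, π * leftReg N n * π⁻¹ = leftReg N (f n) := by
      intro n
      ext x
      simp only [Equiv.Perm.mul_apply, leftReg_apply]
      rw [hπx (n * π⁻¹ x), hmul, mul_assoc, ← hπx (π⁻¹ x), Equiv.Perm.coe_inv, Equiv.apply_symm_apply]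
    have finj : Function.Injective f := by
      intro a b hab
      apply π.injective
      rw [hπx a, hπx b, hab]
    have fsurj : Function.Surjective f := Finite.surjective_of_injective finj
    rw [Hol, Subgroup.mem_normalizer_iff]
    intro h
    constructor
    · rintro ⟨n, rfl⟩
      exact ⟨f n, (hconj n).symm⟩
    · rintro ⟨m, hm⟩
      obtain ⟨n, rfl⟩ := fsurj m
      refine ⟨n, ?_⟩
      have h3 : π * leftReg N n * π⁻¹ = π * h * π⁻¹ := (hconj n).trans hm
      have h4 : π * leftReg N n = π * h := mul_right_cancel h3
      exact mul_left_cancel h4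

open DihedralGroup in
lemma dih_r_pow {n : ℕ} (i : ZMod n) (k : ℕ) : (r i : DihedralGroup n) ^ k = r (k • i) := by
  induction k with
  | zero => simp [one_def, -r_zero]
  | succ m ih => rw [pow_succ, ih, r_mul_r, succ_nsmul]

open DihedralGroup in
lemma dih_sr_pow_odd {n : ℕ} (i : ZMod n) {k : ℕ} (hk : Odd k) :
    (sr i : DihedralGroup n) ^ k = sr i := by
  obtain ⟨m, rfl⟩ := hk
  have h2 : (sr i : DihedralGroup n) ^ 2 = 1 := by
    rw [pow_two, sr_mul_sr, sub_self, one_def]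
  rw [pow_add, pow_mul, h2, one_pow, pow_one, one_mul]

open DihedralGroup in
lemma dihedral_mem_Hol {m : ℕ} [NeZero m] (Φ : Equiv.Perm (DihedralGroup m))
    (Λ : ZMod m → ZMod m) (hΛ : ∀ i j, Λ (i + j) = Λ i + Λ j) (b₀ : ZMod m)
    (hr : ∀ i, Φ (r i) = r (Λ i) * Φ 1)
    (hs : ∀ i, Φ (sr i) = sr (Λ i + b₀) * Φ 1) :
    Φ ∈ Hol (DihedralGroup m) := by
  have hΛ0 : Λ 0 = 0 := by
    have h := hΛ 0 0; simp only [add_zero] at h; exact left_eq_add.mp h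
  have hΛsub : ∀ i j, Λ (i - j) = Λ i - Λ j := by
    intro i j
    have := hΛ (i - j) j
    rw [sub_add_cancel] at this
    rw [eq_sub_iff_add_eq, ← this]
  rw [mem_Hol_iff]
  rintro (i | i) (j | j) <;>
    simp only [r_mul_r, r_mul_sr, sr_mul_r, sr_mul_sr, hr, hs, mul_inv_cancel_right,
      hΛ, hΛsub] <;>
    first
      | rfl
      | (apply congrArg; ring)

def permCongrHom {α β : Type*} (e : α ≃ β) : Equiv.Perm α →* Equiv.Perm β where
  toFun := e.permCongr
  map_one' := by ext x; simp
  map_mul' σ τ := by ext x; simp [Equiv.Perm.mul_apply]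

lemma permCongrHom_apply {α β : Type*} (e : α ≃ β) (σ : Equiv.Perm α) (x : β) :
    permCongrHom e σ x = e (σ (e.symm x)) := rfl

open DihedralGroup in
def mixedEquiv (p q : ℕ) (cop : Nat.Coprime p q) :
    (Multiplicative (ZMod p) × DihedralGroup q) ≃ DihedralGroup (p * q) where
  toFun x := match x with
    | (a, r b) => r ((ZMod.chineseRemainder cop).symm (a.toAdd, b))
    | (a, sr b) => sr ((ZMod.chineseRemainder cop).symm (a.toAdd, b))
  invFun y := match y with
    | r i => (Multiplicative.ofAdd ((ZMod.chineseRemainder cop) i).1,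
        r ((ZMod.chineseRemainder cop) i).2)
    | sr i => (Multiplicative.ofAdd ((ZMod.chineseRemainder cop) i).1,
        sr ((ZMod.chineseRemainder cop) i).2)
  left_inv := by rintro ⟨a, b | b⟩ <;> simp
  right_inv := by rintro (i | i) <;> simp

lemma mixedEquiv_apply_r {p q : ℕ} (cop : Nat.Coprime p q) (a : Multiplicative (ZMod p))
    (b : ZMod q) : mixedEquiv p q cop (a, DihedralGroup.r b)
      = DihedralGroup.r ((ZMod.chineseRemainder cop).symm (a.toAdd, b)) := rfl

lemma mixedEquiv_apply_sr {p q : ℕ} (cop : Nat.Coprime p q) (a : Multiplicative (ZMod p))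
    (b : ZMod q) : mixedEquiv p q cop (a, DihedralGroup.sr b)
      = DihedralGroup.sr ((ZMod.chineseRemainder cop).symm (a.toAdd, b)) := rfl

lemma mixedEquiv_symm_r {p q : ℕ} (cop : Nat.Coprime p q) (i : ZMod (p * q)) :
    (mixedEquiv p q cop).symm (DihedralGroup.r i)
      = (Multiplicative.ofAdd ((ZMod.chineseRemainder cop) i).1,
          DihedralGroup.r ((ZMod.chineseRemainder cop) i).2) := rfl

lemma mixedEquiv_symm_sr {p q : ℕ} (cop : Nat.Coprime p q) (i : ZMod (p * q)) :
    (mixedEquiv p q cop).symm (DihedralGroup.sr i)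
      = (Multiplicative.ofAdd ((ZMod.chineseRemainder cop) i).1,
          DihedralGroup.sr ((ZMod.chineseRemainder cop) i).2) := rfl

-- test: basic small lemmas about orders
section orders
variable {p q : ℕ} (hp : p.Prime) (hq : q.Prime) (hpodd : Odd p) (hqodd : Odd q) (hne : p ≠ q)

lemma mult_pow_self (a : Multiplicative (ZMod p)) : a ^ p = 1 := by
  rw [← ofAdd_toAdd a, ← ofAdd_nsmul, nsmul_eq_mul, ZMod.natCast_self, zero_mul]
  rfl

lemma mult_pow_eq_one {n : ℕ} [Fact p.Prime] (hn : (n : ZMod p) ≠ 0)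
    (a : Multiplicative (ZMod p)) (h : a ^ n = 1) : a = 1 := by
  have : (a ^ n).toAdd = (0 : ZMod p) := by rw [h]; rfl
  rw [toAdd_pow, nsmul_eq_mul] at this
  have := (mul_eq_zero.mp this).resolve_left hn
  rw [← ofAdd_toAdd a, this]; rfl
end orders

open DihedralGroup Multiplicative in
lemma hol_conj {p q : ℕ} (hp : p.Prime) (hq : q.Prime) (hpodd : Odd p) (hqodd : Odd q)
    (hne : p ≠ q) (cop : Nat.Coprime p q)
    (π : Equiv.Perm (Multiplicative (ZMod p) × DihedralGroup q))
    (hπ : π ∈ Hol (Multiplicative (ZMod p) × DihedralGroup q)) :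
    permCongrHom (mixedEquiv p q cop) π ∈ Hol (DihedralGroup (p * q)) := by
  haveI : NeZero p := ⟨hp.ne_zero⟩
  haveI : NeZero q := ⟨hq.ne_zero⟩
  haveI : NeZero (p * q) := ⟨Nat.mul_ne_zero hp.ne_zero hq.ne_zero⟩
  haveI : Fact p.Prime := ⟨hp⟩
  haveI : Fact q.Prime := ⟨hq⟩
  have hpq : (p : ZMod q) ≠ 0 := by
    rw [Ne, ZMod.natCast_eq_zero_iff]
    intro hdvd
    exact hne ((Nat.prime_dvd_prime_iff_eq hq hp).mp hdvd).symm
  have hqp : (q : ZMod p) ≠ 0 := by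
    rw [Ne, ZMod.natCast_eq_zero_iff]
    intro hdvd
    exact hne ((Nat.prime_dvd_prime_iff_eq hp hq).mp hdvd)
  have h2q : (2 : ZMod q) ≠ 0 := by
    have : ((2 : ℕ) : ZMod q) ≠ 0 := by
      rw [Ne, ZMod.natCast_eq_zero_iff]
      intro hdvd
      rcases (Nat.Prime.eq_one_or_self_of_dvd Nat.prime_two q hdvd) with h1 | h2
      · exact hq.one_lt.ne' h1
      · rw [h2] at hqodd
        exact (Nat.not_odd_iff_even.mpr (by decide)) hqodd
    simpa using this
  have h2p : (2 : ZMod p) ≠ 0 := by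
    have : ((2 : ℕ) : ZMod p) ≠ 0 := by
      rw [Ne, ZMod.natCast_eq_zero_iff]
      intro hdvd
      rcases (Nat.Prime.eq_one_or_self_of_dvd Nat.prime_two p hdvd) with h1 | h2
      · exact hp.one_lt.ne' h1
      · rw [h2] at hpodd
        exact (Nat.not_odd_iff_even.mpr (by decide)) hpodd
    simpa using this
  -- order characterizations in E = C_p × D_q
  have hA : ∀ x : Multiplicative (ZMod p) × DihedralGroup q, x ^ p = 1 →
      ∃ a, x = (a, 1) := by
    rintro ⟨a, b | b⟩ hx
    · refine ⟨a, ?_⟩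
      rw [Prod.pow_mk, dih_r_pow, Prod.mk_eq_one] at hx
      have hb : (p : ZMod q) * b = 0 := by
        have := hx.2
        rw [one_def] at this
        rw [← nsmul_eq_mul]
        exact r.inj this
      have : b = 0 := (mul_eq_zero.mp hb).resolve_left hpq
      rw [this, ← one_def]
    · exfalso
      rw [Prod.pow_mk, dih_sr_pow_odd b hpodd, Prod.mk_eq_one, one_def] at hx
      exact absurd hx.2 (by simp [one_def, -r_zero])
  have hB : ∀ x : Multiplicative (ZMod p) × DihedralGroup q, x ^ q = 1 →
      ∃ b, x = (1, DihedralGroup.r b) := by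
    rintro ⟨a, b | b⟩ hx
    · refine ⟨b, ?_⟩
      rw [Prod.pow_mk, Prod.mk_eq_one] at hx
      rw [mult_pow_eq_one hqp a hx.1]
    · exfalso
      rw [Prod.pow_mk, dih_sr_pow_odd b hqodd, Prod.mk_eq_one, one_def] at hx
      exact absurd hx.2 (by simp [one_def, -r_zero])
  have hC : ∀ x : Multiplicative (ZMod p) × DihedralGroup q, x ^ 2 = 1 → x ≠ 1 →
      ∃ b, x = (1, DihedralGroup.sr b) := by
    rintro ⟨a, b | b⟩ hx hne1
    · exfalso
      rw [Prod.pow_mk, dih_r_pow, Prod.mk_eq_one] at hx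
      have ha : a = 1 := mult_pow_eq_one h2p a hx.1
      have hb : (2 : ZMod q) * b = 0 := by
        have := hx.2
        rw [one_def] at this
        have := r.inj this
        rw [← this, nsmul_eq_mul]
        norm_num
      have hb0 : b = 0 := (mul_eq_zero.mp hb).resolve_left h2q
      exact hne1 (by rw [ha, hb0, ← one_def]; rfl)
    · refine ⟨b, ?_⟩
      rw [Prod.pow_mk, Prod.mk_eq_one] at hx
      rw [mult_pow_eq_one h2p a (by simpa using hx.1)]
  -- the multiplicative map associated to π
  rw [mem_Hol_iff] at hπ
  set F : (Multiplicative (ZMod p) × DihedralGroup q) →*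
      (Multiplicative (ZMod p) × DihedralGroup q) :=
    MonoidHom.mk' (fun x => π x * (π 1)⁻¹) hπ with hFdef
  have hπx : ∀ x, π x = F x * π 1 := by
    intro x
    simp [hFdef, MonoidHom.mk'_apply]
  have hFinj : Function.Injective F := by
    intro a b hab
    apply π.injective
    rw [hπx a, hπx b, hab]
  have hu : ∀ a : Multiplicative (ZMod p), ∃ a', F (a, 1) = (a', 1) := by
    intro a
    apply hA
    rw [← map_pow, Prod.pow_mk, mult_pow_self, one_pow]
    exact map_one F
  choose u hFu using hu
  have hv : ∀ b : ZMod q, ∃ b', F (1, DihedralGroup.r b) = (1, DihedralGroup.r b') := by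
    intro b
    apply hB
    rw [← map_pow, Prod.pow_mk, dih_r_pow, one_pow, nsmul_eq_mul, ZMod.natCast_self, zero_mul,
      ← one_def]
    exact map_one F
  choose v hFv using hv
  obtain ⟨b₀, hFs⟩ : ∃ b₀, F (1, DihedralGroup.sr 0) = (1, DihedralGroup.sr b₀) := by
    apply hC
    · rw [← map_pow, Prod.pow_mk, one_pow, pow_two, sr_mul_sr, sub_self, ← one_def]
      exact map_one F
    · intro hcon
      rw [← map_one F] at hcon
      have := hFinj hcon
      simp [Prod.ext_iff, one_def, -r_zero] at this
  -- multiplicativity of the pieces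
  have hu_mul : ∀ a a', u (a * a') = u a * u a' := by
    intro a a'
    have h := map_mul F (a, 1) (a', 1)
    rw [Prod.mk_mul_mk, one_mul, hFu, hFu, hFu, Prod.mk_mul_mk, one_mul] at h
    exact (Prod.mk.injEq _ _ _ _).mp h |>.1
  have hv_add : ∀ b b', v (b + b') = v b + v b' := by
    intro b b'
    have h := map_mul F (1, DihedralGroup.r b) (1, DihedralGroup.r b')
    rw [Prod.mk_mul_mk, one_mul, r_mul_r, hFv, hFv, hFv, Prod.mk_mul_mk, one_mul, r_mul_r] at h
    have := (Prod.mk.injEq _ _ _ _).mp h |>.2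
    exact r.inj this
  have hv0 : v 0 = 0 := by
    have h : F (1, DihedralGroup.r 0) = (1, DihedralGroup.r 0) := by
      rw [← one_def]
      show F 1 = 1
      exact map_one F
    rw [hFv] at h
    have := (Prod.mk.injEq _ _ _ _).mp h |>.2
    exact r.inj this
  have hv_neg : ∀ b, v (-b) = -v b := by
    intro b
    have := hv_add b (-b)
    rw [add_neg_cancel, hv0] at this
    linear_combination -this
  have hFr : ∀ (a : Multiplicative (ZMod p)) (b : ZMod q),
      F (a, DihedralGroup.r b) = (u a, DihedralGroup.r (v b)) := by
    intro a b
    have h : ((a, DihedralGroup.r b) : Multiplicative (ZMod p) × DihedralGroup q)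
        = (a, 1) * (1, DihedralGroup.r b) := by
      rw [Prod.mk_mul_mk, mul_one, one_mul]
    rw [h, map_mul, hFu, hFv, Prod.mk_mul_mk, mul_one, one_mul]
  have hFsr : ∀ (a : Multiplicative (ZMod p)) (b : ZMod q),
      F (a, DihedralGroup.sr b) = (u a, DihedralGroup.sr (b₀ + v b)) := by
    intro a b
    have h : ((a, DihedralGroup.sr b) : Multiplicative (ZMod p) × DihedralGroup q)
        = (a, DihedralGroup.r (-b)) * (1, DihedralGroup.sr 0) := by
      rw [Prod.mk_mul_mk, mul_one, r_mul_sr, zero_sub, neg_neg]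
    rw [h, map_mul, hFr, hFs, Prod.mk_mul_mk, mul_one, r_mul_sr, hv_neg, sub_neg_eq_add]
  -- setup for the conjugated permutation
  have crt_add : ∀ x y : ZMod p × ZMod q, (ZMod.chineseRemainder cop).symm x
      + (ZMod.chineseRemainder cop).symm y = (ZMod.chineseRemainder cop).symm (x + y) :=
    fun x y => (map_add (ZMod.chineseRemainder cop).symm x y).symm
  have crt_sub : ∀ x y : ZMod p × ZMod q, (ZMod.chineseRemainder cop).symm x
      - (ZMod.chineseRemainder cop).symm y = (ZMod.chineseRemainder cop).symm (x - y) :=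
    fun x y => (map_sub (ZMod.chineseRemainder cop).symm x y).symm
  have crt_map_add : ∀ i j : ZMod (p * q),
      (ZMod.chineseRemainder cop) (i + j) = (ZMod.chineseRemainder cop) i
        + (ZMod.chineseRemainder cop) j := fun i j => map_add _ i j
  have hβsymm1 : (mixedEquiv p q cop).symm 1 = 1 := by
    have h1 : mixedEquiv p q cop (1, (1 : DihedralGroup q)) = 1 := by
      show mixedEquiv p q cop (1, DihedralGroup.r 0) = 1
      rw [mixedEquiv_apply_r, toAdd_one, Prod.mk_zero_zero, map_zero]
      rfl
    rw [← h1, Equiv.symm_apply_apply]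
    rfl
  rcases hg : π 1 with ⟨c, d | d⟩
  · -- case π 1 = (c, r d)
    have hΦ1 : permCongrHom (mixedEquiv p q cop) π 1
        = r ((ZMod.chineseRemainder cop).symm (c.toAdd, d)) := by
      rw [permCongrHom_apply, hβsymm1, hg, mixedEquiv_apply_r]
    refine dihedral_mem_Hol _
      (fun i => (ZMod.chineseRemainder cop).symm
        ((u (Multiplicative.ofAdd ((ZMod.chineseRemainder cop) i).1)).toAdd,
          v ((ZMod.chineseRemainder cop) i).2)) ?_
      ((ZMod.chineseRemainder cop).symm (0, b₀)) ?_ ?_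
    · intro i j
      rw [crt_map_add, Prod.fst_add, Prod.snd_add, ofAdd_add, hu_mul, toAdd_mul, hv_add,
        crt_add, Prod.mk_add_mk]
    · intro i
      rw [hΦ1, permCongrHom_apply, mixedEquiv_symm_r, hπx, hFr, hg, Prod.mk_mul_mk, r_mul_r,
        mixedEquiv_apply_r, r_mul_r, crt_add, Prod.mk_add_mk]
      refine congrArg _ (congrArg _ ?_)
      rw [Prod.mk.injEq, toAdd_mul]
      constructor <;> ring
    · intro i
      rw [hΦ1, permCongrHom_apply, mixedEquiv_symm_sr, hπx, hFsr, hg, Prod.mk_mul_mk, sr_mul_r,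
        mixedEquiv_apply_sr, sr_mul_r, crt_add, Prod.mk_add_mk, crt_add, Prod.mk_add_mk]
      refine congrArg _ (congrArg _ ?_)
      rw [Prod.mk.injEq, toAdd_mul]
      constructor <;> ring
  · -- case π 1 = (c, sr d)
    have hΦ1 : permCongrHom (mixedEquiv p q cop) π 1
        = sr ((ZMod.chineseRemainder cop).symm (c.toAdd, d)) := by
      rw [permCongrHom_apply, hβsymm1, hg, mixedEquiv_apply_sr]
    refine dihedral_mem_Hol _
      (fun i => (ZMod.chineseRemainder cop).symm
        (-(u (Multiplicative.ofAdd ((ZMod.chineseRemainder cop) i).1)).toAdd,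
          v ((ZMod.chineseRemainder cop) i).2)) ?_
      ((ZMod.chineseRemainder cop).symm (0, b₀)) ?_ ?_
    · intro i j
      rw [crt_map_add, Prod.fst_add, Prod.snd_add, ofAdd_add, hu_mul, toAdd_mul, hv_add,
        neg_add, crt_add, Prod.mk_add_mk]
    · intro i
      rw [hΦ1, permCongrHom_apply, mixedEquiv_symm_r, hπx, hFr, hg, Prod.mk_mul_mk, r_mul_sr,
        mixedEquiv_apply_sr, r_mul_sr, crt_sub, Prod.mk_sub_mk]
      refine congrArg _ (congrArg _ ?_)
      rw [Prod.mk.injEq, toAdd_mul]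
      constructor <;> ring
    · intro i
      rw [hΦ1, permCongrHom_apply, mixedEquiv_symm_sr, hπx, hFsr, hg, Prod.mk_mul_mk, sr_mul_sr,
        mixedEquiv_apply_r, sr_mul_sr, crt_add, Prod.mk_add_mk, crt_sub, Prod.mk_sub_mk]
      refine congrArg _ (congrArg _ ?_)
      rw [Prod.mk.injEq, toAdd_mul]
      constructor <;> ring

lemma embeds_key {p q : ℕ} (hp : p.Prime) (hq : q.Prime) (hpodd : Odd p) (hqodd : Odd q)
    (hne : p ≠ q) (G : Type*) [Group G]
    (h : EmbedsTransitively G (Multiplicative (ZMod p) × DihedralGroup q)) :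
    EmbedsTransitively G (DihedralGroup (p * q)) := by
  obtain ⟨φ, hinj, hrange, htrans⟩ := h
  have cop : Nat.Coprime p q := (Nat.coprime_primes hp hq).mpr hne
  refine ⟨(permCongrHom (mixedEquiv p q cop)).comp φ, ?_, ?_, ?_⟩
  · intro a b hab
    exact hinj ((mixedEquiv p q cop).permCongr.injective hab)
  · rintro x ⟨g, rfl⟩
    exact hol_conj hp hq hpodd hqodd hne cop (φ g) (hrange ⟨g, rfl⟩)
  · intro a b
    obtain ⟨σ, hσmem, hσ⟩ := htrans ((mixedEquiv p q cop).symm a) ((mixedEquiv p q cop).symm b)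
    obtain ⟨g, rfl⟩ := hσmem
    exact ⟨permCongrHom (mixedEquiv p q cop) (φ g), ⟨g, rfl⟩, by
      rw [permCongrHom_apply, hσ, Equiv.apply_symm_apply]⟩

theorem embeds_mixed_implies_embeds_dihedral (p q : ℕ) (hp : p.Prime) (hq : q.Prime)
    (hpodd : Odd p) (hqodd : Odd q) (hlt : q < p)
    (G : Type*) [Group G] [Finite G]
    (h : EmbedsTransitively G (Multiplicative (ZMod p) × DihedralGroup q) ∨
         EmbedsTransitively G (Multiplicative (ZMod q) × DihedralGroup p)) :
    EmbedsTransitively G (DihedralGroup (p * q)) := by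
  rcases h with h | h
  · exact embeds_key hp hq hpodd hqodd (ne_of_gt hlt) G h
  · have := embeds_key hq hp hqodd hpodd (ne_of_lt hlt) G h
    rwa [Nat.mul_comm q p] at this
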